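/- Let n ≥ 3 be an integer and let X₁, …, Xₙ be real numbers with X₁ + ⋯ + Xₙ = 0 and (X₁,…,Xₙ) ≠ (0,…,0). Then g₂(X₁,…,Xₙ) < 0; that is, the restriction of the quadratic form g₂ to the hyperplane { X : Σᵢ Xᵢ = 0 } is negative definite. -/
import Mathlib


open Finset

/-- The quadratic form `g₂(h₁,…,hₙ) = Σ_{1≤i<j≤n} hᵢhⱼ − (1/(n−1))·h₁·Σ_{j=2}^{n} hⱼ
− Σ_{1≤j≤n, j≠2} hⱼ² + (1/(n−1))·h₁²` (0-based: `h₁ = h 0`, `h₂ = h 1`,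
`Σ_{j=2}^{n}` is the sum over indices `j` with `1 ≤ j`). -/
noncomputable def gTwo (n : ℕ) (hn : 3 ≤ n) (h : Fin n → ℝ) : ℝ :=
  (∑ i : Fin n, ∑ j : Fin n, if i < j then h i * h j else 0)
    - (1 / ((n : ℝ) - 1)) * h ⟨0, by omega⟩ * (∑ j : Fin n, if 1 ≤ (j : ℕ) then h j else 0)
    - (∑ j : Fin n, if (j : ℕ) ≠ 1 then h j ^ 2 else 0)
    + (1 / ((n : ℝ) - 1)) * h ⟨0, by omega⟩ ^ 2

theorem stmt_17 (n : ℕ) (hn : 3 ≤ n) (X : Fin n → ℝ)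
    (hsum : ∑ i, X i = 0) (hX : X ≠ 0) :
    gTwo n hn X < 0 := by
  set i0 : Fin n := ⟨0, by omega⟩ with hi0
  set i1 : Fin n := ⟨1, by omega⟩ with hi1
  set Q : ℝ := ∑ i, X i ^ 2 with hQ
  -- cross term
  have hA : (∑ i : Fin n, ∑ j : Fin n, if i < j then X i * X j else 0) = -Q / 2 := by
    have hsplit : ∀ i j : Fin n, X i * X j =
        (if i < j then X i * X j else 0) + (if j < i then X i * X j else 0)
          + (if i = j then X i * X j else 0) := by
      intro i j
      rcases lt_trichotomy i j with h | h | h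
      · simp [h, asymm h, h.ne]
      · simp [h, lt_irrefl]
      · simp [h, asymm h, h.ne']
    have htot : (0 : ℝ) = ∑ i : Fin n, ∑ j : Fin n, X i * X j := by
      rw [← Finset.sum_mul_sum, hsum, zero_mul]
    have hAB : (∑ i : Fin n, ∑ j : Fin n, if j < i then X i * X j else 0)
        = ∑ i : Fin n, ∑ j : Fin n, if i < j then X i * X j else 0 := by
      rw [Finset.sum_comm]
      refine Finset.sum_congr rfl fun i _ => Finset.sum_congr rfl fun j _ => ?_
      rcases lt_or_ge i j with h | h
      · simp [h, mul_comm]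
      · simp [not_lt.mpr h]
    have hC : (∑ i : Fin n, ∑ j : Fin n, if i = j then X i * X j else 0) = Q := by
      simp only [Finset.sum_ite_eq, Finset.mem_univ, if_true]
      rw [hQ]
      exact Finset.sum_congr rfl fun i _ => (sq (X i)).symm
    have hsplit2 : (∑ i : Fin n, ∑ j : Fin n, X i * X j)
        = (∑ i : Fin n, ∑ j : Fin n, if i < j then X i * X j else 0)
          + (∑ i : Fin n, ∑ j : Fin n, if j < i then X i * X j else 0)
          + (∑ i : Fin n, ∑ j : Fin n, if i = j then X i * X j else 0) := by
      rw [← Finset.sum_add_distrib, ← Finset.sum_add_distrib]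
      refine Finset.sum_congr rfl fun i _ => ?_
      rw [← Finset.sum_add_distrib, ← Finset.sum_add_distrib]
      exact Finset.sum_congr rfl fun j _ => hsplit i j
    rw [hsplit2, hAB, hC] at htot
    linarith
  -- linear term
  have hS1 : (∑ j : Fin n, if 1 ≤ (j : ℕ) then X j else 0) = -X i0 := by
    have h1 : ∀ j : Fin n, X j =
        (if 1 ≤ (j : ℕ) then X j else 0) + (if j = i0 then X j else 0) := by
      intro j
      by_cases hj : (j : ℕ) = 0
      · simp [hj, Fin.ext_iff, hi0]
      · simp [Fin.ext_iff, hi0, hj, Nat.one_le_iff_ne_zero.mpr hj]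
    have := hsum
    rw [Finset.sum_congr rfl fun j _ => h1 j, Finset.sum_add_distrib] at this
    simp only [Finset.sum_ite_eq', Finset.mem_univ, if_true] at this
    linarith
  -- quadratic sum without index 1
  have hS2 : (∑ j : Fin n, if (j : ℕ) ≠ 1 then X j ^ 2 else 0) = Q - X i1 ^ 2 := by
    have h1 : ∀ j : Fin n, X j ^ 2 =
        (if (j : ℕ) ≠ 1 then X j ^ 2 else 0) + (if j = i1 then X j ^ 2 else 0) := by
      intro j
      by_cases hj : (j : ℕ) = 1
      · simp [hj, Fin.ext_iff, hi1]
      · simp [Fin.ext_iff, hi1, hj]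
    have h2 : Q = (∑ j : Fin n, if (j : ℕ) ≠ 1 then X j ^ 2 else 0) + X i1 ^ 2 := by
      rw [hQ, Finset.sum_congr rfl fun j _ => h1 j, Finset.sum_add_distrib]
      simp [Finset.sum_ite_eq']
    linarith
  -- positivity facts
  have hQpos : 0 < Q := by
    obtain ⟨k, hk⟩ : ∃ k, X k ≠ 0 := by
      by_contra h
      push_neg at h
      exact hX (funext h)
    have h1 : X k ^ 2 ≤ Q :=
      Finset.single_le_sum (fun i _ => sq_nonneg (X i)) (Finset.mem_univ k)
    have h2 : 0 < X k ^ 2 := (sq_nonneg _).lt_of_ne (Ne.symm (pow_ne_zero 2 hk))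
    linarith
  have hne : i0 ≠ i1 := by simp [Fin.ext_iff, hi0, hi1]
  have hQge : X i0 ^ 2 + X i1 ^ 2 ≤ Q := by
    have := Finset.sum_le_sum_of_subset_of_nonneg
      (Finset.subset_univ ({i0, i1} : Finset (Fin n)))
      (fun i _ _ => sq_nonneg (X i))
    rwa [Finset.sum_pair hne] at this
  have hn3 : (3 : ℝ) ≤ (n : ℝ) := by exact_mod_cast hn
  have hc0 : 0 < 1 / ((n : ℝ) - 1) := div_pos one_pos (by linarith)
  have hc : 1 / ((n : ℝ) - 1) ≤ 1 / 2 := by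
    rw [div_le_div_iff₀ (by linarith) (by norm_num)]
    linarith
  unfold gTwo
  rw [hA, hS1, hS2]
  nlinarith [sq_nonneg (X i0), hQpos, hQge, hc, hc0, sq_nonneg (X i1)]
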